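/- Suppose c ≥ n and n ≥ q ≥ 1. Then there exists a collection of directed graphs G_1,…,G_c on a common set of n vertices containing no rainbow S_{0,q} with ∑_{i=1}^c e(G_i) = (q−1)cn, which exceeds (q−1)(n²−n) when q ≥ 2. -/

import Mathlib

/-- If `c ≥ n ≥ q ≥ 1`, there is a rainbow-`S_{0,q}`-free collection with total
number of edges `(q-1)cn`, exceeding `(q-1)(n²-n)` when `q ≥ 2`. -/
theorem exists_no_rainbow_out_star_large_sum_of_c_ge_n
    (n c q : ℕ) (hcn : c ≥ n) (hnq : n ≥ q) (hq : q ≥ 1) :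
    ∃ G : Fin c → Finset (Fin n × Fin n),
      (∀ i v, (v, v) ∉ G i) ∧
      (¬ ∃ (v : Fin n) (u : Fin q → Fin n) (ι : Fin q → Fin c),
        Function.Injective u ∧ Function.Injective ι ∧
        ∀ j, u j ≠ v ∧ (v, u j) ∈ G (ι j)) ∧
      ∑ i, (G i).card = (q - 1) * c * n ∧
      (2 ≤ q → (q - 1) * (n ^ 2 - n) < (q - 1) * c * n) := by
  haveI : NeZero n := ⟨by omega⟩
  set S : Finset (Fin n × Fin n) :=
    Finset.univ.filter (fun p => (p.2 - p.1).val ∈ Finset.Ico 1 q) with hS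
  open Fin.NatCast in
  have hScard : S.card = n * (q - 1) := by
    have := Finset.card_bij' (s := S)
      (t := (Finset.univ : Finset (Fin n)) ×ˢ (Finset.Ico 1 q : Finset ℕ))
      (fun p _ => (p.1, (p.2 - p.1).val))
      (fun m _ => (m.1, m.1 + (m.2 : Fin n)))
      (by intro a ha; simp [hS] at ha ⊢; exact ha)
      (by
        intro a ha
        simp only [Finset.mem_product, Finset.mem_Ico, Finset.mem_univ, true_and] at ha
        simp only [hS, Finset.mem_filter, Finset.mem_univ, true_and, Finset.mem_Ico]
        rw [add_sub_cancel_left, Fin.val_cast_of_lt (by omega)]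
        exact ha)
      (by
        intro a ha
        have : ((((a.2 - a.1).val : ℕ) : Fin n)) = a.2 - a.1 := Fin.cast_val_eq_self _
        show (a.1, a.1 + (((a.2 - a.1).val : ℕ) : Fin n)) = a
        rw [this, add_sub_cancel]
        )
      (by
        intro a ha
        simp only [Finset.mem_product, Finset.mem_Ico, Finset.mem_univ, true_and] at ha
        show (a.1, (a.1 + ((a.2 : ℕ) : Fin n) - a.1).val) = a
        rw [add_sub_cancel_left, Fin.val_cast_of_lt (by omega)])
    rw [this, Finset.card_product, Finset.card_univ, Fintype.card_fin, Nat.card_Ico]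
  refine ⟨fun _ => S, ?_, ?_, ?_, ?_⟩
  · intro i v
    simp [hS]
  · rintro ⟨v, u, ι, hu, hι, h⟩
    have hmem : ∀ j, (u j - v).val ∈ Finset.Ico 1 q := by
      intro j
      have := (h j).2
      simp [hS] at this
      simpa using this
    have hinj : Set.InjOn (fun j : Fin q => (u j - v).val) ↑(Finset.univ : Finset (Fin q)) := by
      intro a _ b _ hab
      exact hu (by
        have : u a - v = u b - v := Fin.val_injective hab
        exact sub_left_injective this)
    have hle := Finset.card_le_card_of_injOn _ (fun j _ => hmem j) hinj
    simp [Nat.card_Ico] at hle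
    omega
  · rw [Finset.sum_const, Finset.card_univ, Fintype.card_fin, hScard, smul_eq_mul]
    ring
  · intro h2
    have h1 : n * n - n < c * n := by
      have hlt : n * n - n < n * n := Nat.sub_lt (Nat.mul_pos (by omega) (by omega)) (by omega)
      have hle : n * n ≤ c * n := Nat.mul_le_mul_right n hcn
      omega
    have : (q - 1) * (n * n - n) < (q - 1) * (c * n) :=
      Nat.mul_lt_mul_of_le_of_lt (le_refl _) h1 (by omega)
    calc (q - 1) * (n ^ 2 - n) = (q - 1) * (n * n - n) := by ring_nf
      _ < (q - 1) * (c * n) := this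
      _ = (q - 1) * c * n := by ring
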